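/- Fix d ∈ ℕ, reals ε' > 0 and ε_1, …, ε_d > 0, and integers a_1, …, a_d and b_1, …, b_d with |a_j − b_j| ≤ 1 for every j ∈ {1, …, d}. Define A = ∑_{k=0}^∞ Geo(e^{−ε'})(k) · ∏_{j=1}^{d} Geo(e^{−ε_j})(< k − a_j) and A' = ∑_{k=0}^∞ Geo(e^{−ε'})(k) · ∏_{j=1}^{d} Geo(e^{−ε_j})(< k − b_j). Then A ≤ e^{ε'} · A'. (This is the probability that the AboveThreshold mechanism outputs ⊥, i.e., no noisy query exceeds the noisy threshold, on two neighboring datasets; the bound is the ex-post DP guarantee ε' for output ⊥.) -/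

import Mathlib

open Real Finset

/-- The geometric distribution with failure probability `p`: mass `(1-p)·p^k` at each
integer `k ≥ 0`, and `0` at negative integers. -/
noncomputable def Geo (p : ℝ) (k : ℤ) : ℝ := if 0 ≤ k then (1 - p) * p ^ k.toNat else 0

/-- `Geo(p)(< x) = ∑_{y=0}^{x-1} Geo(p)(y)` (which is `0` when `x ≤ 0`). -/
noncomputable def GeoLT (p : ℝ) (x : ℤ) : ℝ := ∑ y ∈ Finset.range x.toNat, Geo p (y : ℤ)

lemma Geo_nonneg {p : ℝ} (hp0 : 0 ≤ p) (hp1 : p ≤ 1) (k : ℤ) : 0 ≤ Geo p k := by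
  unfold Geo
  split
  · exact mul_nonneg (by linarith) (pow_nonneg hp0 _)
  · exact le_refl 0

lemma GeoLT_nonneg {p : ℝ} (hp0 : 0 ≤ p) (hp1 : p ≤ 1) (x : ℤ) : 0 ≤ GeoLT p x :=
  Finset.sum_nonneg fun _ _ => Geo_nonneg hp0 hp1 _

lemma GeoLT_le_one {p : ℝ} (hp0 : 0 ≤ p) (hp1 : p ≤ 1) (x : ℤ) : GeoLT p x ≤ 1 := by
  unfold GeoLT Geo
  have h : ∀ y ∈ Finset.range x.toNat, (if (0:ℤ) ≤ (y:ℤ) then (1 - p) * p ^ ((y:ℤ)).toNat else 0)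
      = (1 - p) * p ^ y := by
    intro y _
    simp
  rw [Finset.sum_congr rfl h, ← Finset.mul_sum]
  have := geom_sum_mul p x.toNat
  nlinarith [pow_nonneg hp0 x.toNat]

lemma GeoLT_mono {p : ℝ} (hp0 : 0 ≤ p) (hp1 : p ≤ 1) {x y : ℤ} (hxy : x ≤ y) :
    GeoLT p x ≤ GeoLT p y := by
  unfold GeoLT
  exact Finset.sum_le_sum_of_subset_of_nonneg
    (Finset.range_subset_range.2 (Int.toNat_le_toNat hxy))
    (fun _ _ _ => Geo_nonneg hp0 hp1 _)

theorem abovethreshold_expost_bot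
    (d : ℕ) (ε' : ℝ) (hε' : 0 < ε')
    (ε : Fin d → ℝ) (hε : ∀ j, 0 < ε j)
    (a b : Fin d → ℤ) (hab : ∀ j, |a j - b j| ≤ 1) :
    (∑' k : ℕ, Geo (Real.exp (-ε')) k *
        ∏ j : Fin d, GeoLT (Real.exp (-(ε j))) (k - a j))
    ≤ Real.exp ε' *
      ∑' k : ℕ, Geo (Real.exp (-ε')) k *
        ∏ j : Fin d, GeoLT (Real.exp (-(ε j))) (k - b j) := by
  set p : ℝ := Real.exp (-ε') with hp
  have hp0 : 0 < p := Real.exp_pos _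
  have hp1 : p < 1 := by
    rw [hp]
    exact Real.exp_lt_one_iff.2 (by linarith)
  have hq0 : ∀ j : Fin d, 0 ≤ Real.exp (-(ε j)) := fun j => (Real.exp_pos _).le
  have hq1 : ∀ j : Fin d, Real.exp (-(ε j)) ≤ 1 :=
    fun j => (Real.exp_lt_one_iff.2 (by linarith [hε j])).le
  set f : ℕ → ℝ := fun k => Geo p k * ∏ j : Fin d, GeoLT (Real.exp (-(ε j))) (k - b j) with hf
  set g : ℕ → ℝ := fun k => Geo p k * ∏ j : Fin d, GeoLT (Real.exp (-(ε j))) (k - a j) with hg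
  have hprod_mem : ∀ (c : Fin d → ℤ) (k : ℕ),
      0 ≤ (∏ j : Fin d, GeoLT (Real.exp (-(ε j))) (k - c j)) ∧
      (∏ j : Fin d, GeoLT (Real.exp (-(ε j))) (k - c j)) ≤ 1 := by
    intro c k
    constructor
    · exact Finset.prod_nonneg fun j _ => GeoLT_nonneg (hq0 j) (hq1 j) _
    · exact Finset.prod_le_one (fun j _ => GeoLT_nonneg (hq0 j) (hq1 j) _)
        (fun j _ => GeoLT_le_one (hq0 j) (hq1 j) _)
  have hGeo_nat : ∀ k : ℕ, Geo p (k : ℤ) = (1 - p) * p ^ k := by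
    intro k; unfold Geo; simp
  have hsummable : ∀ c : Fin d → ℤ, Summable (fun k : ℕ =>
      Geo p k * ∏ j : Fin d, GeoLT (Real.exp (-(ε j))) (k - c j)) := by
    intro c
    apply Summable.of_nonneg_of_le
      (fun k => mul_nonneg (Geo_nonneg hp0.le hp1.le _) (hprod_mem c k).1)
      (fun k => ?_)
      (((summable_geometric_of_lt_one hp0.le hp1)).mul_left (1 - p))
    calc Geo p k * ∏ j : Fin d, GeoLT (Real.exp (-(ε j))) (k - c j)
        ≤ Geo p k * 1 := by
          exact mul_le_mul_of_nonneg_left (hprod_mem c k).2 (Geo_nonneg hp0.le hp1.le _)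
      _ = (1 - p) * p ^ k := by rw [mul_one, hGeo_nat]
  have hsf : Summable f := hsummable b
  have hsg : Summable g := hsummable a
  have key : ∀ k : ℕ, g k ≤ Real.exp ε' * f (k + 1) := by
    intro k
    have hGk : Geo p (k : ℤ) = Real.exp ε' * Geo p ((k + 1 : ℕ) : ℤ) := by
      rw [hGeo_nat, hGeo_nat, pow_succ]
      have h1 : Real.exp ε' * p = 1 := by rw [hp, ← Real.exp_add]; simp
      linear_combination (-(1 - p) * p ^ k) * h1
    have hGk' := hGeo_nat k
    have hprod : (∏ j : Fin d, GeoLT (Real.exp (-(ε j))) (k - a j))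
        ≤ ∏ j : Fin d, GeoLT (Real.exp (-(ε j))) (((k + 1 : ℕ) : ℤ) - b j) := by
      apply Finset.prod_le_prod (fun j _ => GeoLT_nonneg (hq0 j) (hq1 j) _)
      intro j _
      apply GeoLT_mono (hq0 j) (hq1 j)
      obtain ⟨h1, h2⟩ := abs_le.1 (hab j)
      push_cast
      linarith
    calc g k = Geo p (k : ℤ) * ∏ j : Fin d, GeoLT (Real.exp (-(ε j))) (k - a j) := rfl
      _ ≤ Geo p (k : ℤ) * ∏ j : Fin d, GeoLT (Real.exp (-(ε j))) (((k + 1 : ℕ) : ℤ) - b j) :=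
          mul_le_mul_of_nonneg_left hprod (Geo_nonneg hp0.le hp1.le _)
      _ = Real.exp ε' * f (k + 1) := by
          show _ = Real.exp ε' * (Geo p ((k + 1 : ℕ) : ℤ) * ∏ j : Fin d, GeoLT (Real.exp (-(ε j))) (((k + 1 : ℕ) : ℤ) - b j))
          rw [hGk]; ring
  have hsf' : Summable (fun k : ℕ => Real.exp ε' * f (k + 1)) :=
    ((hsf.comp_injective Nat.succ_injective)).mul_left _
  calc ∑' k : ℕ, g k ≤ ∑' k : ℕ, Real.exp ε' * f (k + 1) := Summable.tsum_le_tsum key hsg hsf'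
    _ = Real.exp ε' * ∑' k : ℕ, f (k + 1) := tsum_mul_left
    _ ≤ Real.exp ε' * ∑' k : ℕ, f k := by
        apply mul_le_mul_of_nonneg_left _ (Real.exp_pos _).le
        apply Summable.tsum_le_tsum_of_inj (fun k => k + 1) Nat.succ_injective
          (fun c _ => mul_nonneg (Geo_nonneg hp0.le hp1.le _) (hprod_mem b c).1)
          (fun k => le_refl _) (hsf.comp_injective Nat.succ_injective) hsf
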